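/- arXiv:1604.00774 — 2 statements merged into one kernel-verified Lean document; each statement's English description precedes it below -/
import Mathlib

section
/- Let β ∈ (0,1], ρ > 0, and z ∈ ℂ with Re(1/z) ≥ ρ (and z ≠ 0). Then Re(z^(−β)) ≥ ρ^β, where z^(−β) is defined using the principal branch of the logarithm. -/
open Real

/-- Key real inequality: `(cos θ)^β ≤ cos (β θ)` for `θ ∈ [0, π/2)`, `β ∈ (0,1]`. -/
lemma cos_rpow_le_cos_mul {β θ : ℝ} (hβ0 : 0 < β) (hβ1 : β ≤ 1)
    (hθ0 : 0 ≤ θ) (hθ : θ < π / 2) : (Real.cos θ) ^ β ≤ Real.cos (β * θ) := by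
  set f : ℝ → ℝ := fun t => Real.cos (β * t) - (Real.cos t) ^ β with hf
  have key : ∀ t ∈ Set.Icc (0:ℝ) θ, HasDerivAt f
      (β * ((Real.cos t) ^ (β - 1) * Real.sin t - Real.sin (β * t))) t := by
    intro t ht
    have hcos : 0 < Real.cos t :=
      Real.cos_pos_of_mem_Ioo ⟨by linarith [pi_pos, ht.1], lt_of_le_of_lt ht.2 hθ⟩
    have h1 : HasDerivAt (fun t => Real.cos (β * t)) (-Real.sin (β * t) * β) t := by
      have := (Real.hasDerivAt_cos (β * t)).comp t
        ((hasDerivAt_id t).const_mul β)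
      simpa [mul_comm, Function.comp_def] using this
    have h2 : HasDerivAt (fun t => (Real.cos t) ^ β)
        (β * (Real.cos t) ^ (β - 1) * (-Real.sin t)) t := by
      have := (Real.hasDerivAt_rpow_const (p := β) (Or.inl hcos.ne')).comp t
        (Real.hasDerivAt_cos t)
      simpa [mul_comm, mul_assoc, mul_left_comm, Function.comp_def] using this
    have := h1.sub h2
    convert (show HasDerivAt f _ t from this) using 1
    ring
  have hmono : MonotoneOn f (Set.Icc 0 θ) := by
    apply monotoneOn_of_deriv_nonneg (convex_Icc 0 θ)
    · exact ContinuousOn.sub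
        (Real.continuous_cos.comp (continuous_const.mul continuous_id)).continuousOn
        (ContinuousOn.rpow_const Real.continuous_cos.continuousOn (fun t ht => Or.inl
          (Real.cos_pos_of_mem_Ioo ⟨by linarith [pi_pos, ht.1],
            lt_of_le_of_lt ht.2 hθ⟩).ne'))
    · intro t ht
      rw [interior_Icc] at ht
      exact (key t (Set.mem_Icc_of_Ioo ht)).differentiableAt.differentiableWithinAt
    · intro t ht
      rw [interior_Icc] at ht
      rw [(key t (Set.mem_Icc_of_Ioo ht)).deriv]
      have ht0 : 0 < t := ht.1
      have htπ : t < π / 2 := lt_trans ht.2 hθ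
      have hcos : 0 < Real.cos t := Real.cos_pos_of_mem_Ioo ⟨by linarith [pi_pos], htπ⟩
      have h1 : (1:ℝ) ≤ (Real.cos t) ^ (β - 1) :=
        Real.one_le_rpow_of_pos_of_le_one_of_nonpos hcos (Real.cos_le_one t)
          (by linarith)
      have hsin : Real.sin (β * t) ≤ Real.sin t := by
        rcases eq_or_lt_of_le hβ1 with h | h
        · simp [h]
        · have : β * t < t := by nlinarith
          exact le_of_lt (Real.strictMonoOn_sin
            ⟨by nlinarith [pi_pos], by nlinarith⟩ ⟨by linarith, le_of_lt htπ⟩ this)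
      have hsint : 0 ≤ Real.sin t := Real.sin_nonneg_of_nonneg_of_le_pi
        (le_of_lt ht0) (by linarith [pi_pos])
      have : Real.sin (β * t) ≤ (Real.cos t) ^ (β - 1) * Real.sin t := by
        calc Real.sin (β * t) ≤ Real.sin t := hsin
          _ = 1 * Real.sin t := (one_mul _).symm
          _ ≤ (Real.cos t) ^ (β - 1) * Real.sin t := by
              exact mul_le_mul_of_nonneg_right h1 hsint
      nlinarith
  have h0 : f 0 = 0 := by simp [hf]
  have := hmono (Set.left_mem_Icc.2 hθ0) (Set.right_mem_Icc.2 hθ0) hθ0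
  rw [h0] at this
  simpa [hf, sub_nonneg] using this

/-- If `Re(1/z) ≥ ρ > 0` and `β ∈ (0,1]`, then `Re(z^(−β)) ≥ ρ^β`
(principal branch). -/
theorem re_cpow_neg_ge (β ρ : ℝ) (hβ : β ∈ Set.Ioc (0:ℝ) 1) (hρ : 0 < ρ)
    (z : ℂ) (hz : z ≠ 0) (hre : ρ ≤ (1 / z).re) :
    ρ ^ β ≤ (z ^ (-(β : ℂ))).re := by
  obtain ⟨hβ0, hβ1⟩ := hβ
  set w : ℂ := z⁻¹ with hw
  have hw0 : w ≠ 0 := inv_ne_zero hz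
  have hwre : ρ ≤ w.re := by simpa [hw, one_div] using hre
  have hwre0 : 0 < w.re := lt_of_lt_of_le hρ hwre
  have hzre : 0 < z.re := by
    have := Complex.inv_re w
    rw [hw, inv_inv] at this
    rw [this]
    exact div_pos hwre0 (Complex.normSq_pos.2 hw0)
  have hargz : z.arg ≠ π := by
    intro h
    have := Complex.abs_arg_lt_pi_div_two_iff.2 (Or.inl hzre)
    rw [h, abs_of_pos pi_pos] at this
    linarith [pi_pos]
  have hpow : z ^ (-(β : ℂ)) = w ^ (β : ℂ) := by
    rw [Complex.cpow_neg, hw, Complex.inv_cpow _ _ hargz]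
  rw [hpow]
  -- compute the real part of w ^ β
  have hargw : |w.arg| < π / 2 := Complex.abs_arg_lt_pi_div_two_iff.2 (Or.inl hwre0)
  set θ : ℝ := w.arg with hθ
  set r : ℝ := ‖w‖ with hr
  have hr0 : 0 < r := norm_pos_iff.mpr hw0
  have hre_eq : (w ^ (β : ℂ)).re = r ^ β * Real.cos (β * θ) := by
    rw [Complex.cpow_def_of_ne_zero hw0, Complex.exp_re]
    have h1 : (Complex.log w * (β : ℂ)).re = Real.log r * β := by
      simp [Complex.log_re, hr]
    have h2 : (Complex.log w * (β : ℂ)).im = θ * β := by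
      simp [Complex.log_im, hθ]
    rw [h1, h2, Real.rpow_def_of_pos hr0, mul_comm θ β]
  rw [hre_eq]
  have hcosθ : Real.cos θ = w.re / r := Complex.cos_arg hw0
  have hwre_eq : w.re = r * Real.cos θ := by
    rw [hcosθ]; field_simp
  have hkey : (Real.cos θ) ^ β ≤ Real.cos (β * θ) := by
    have habs : Real.cos θ = Real.cos |θ| := (Real.cos_abs θ).symm
    have habs2 : Real.cos (β * θ) = Real.cos (β * |θ|) := by
      rcases abs_cases θ with ⟨h, _⟩ | ⟨h, _⟩
      · rw [h]
      · rw [h, mul_neg, Real.cos_neg]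
    rw [habs, habs2]
    exact cos_rpow_le_cos_mul hβ0 hβ1 (abs_nonneg θ) hargw
  have hcos_pos : 0 < Real.cos θ := by
    rw [hcosθ]; exact div_pos hwre0 hr0
  calc ρ ^ β ≤ (w.re) ^ β := Real.rpow_le_rpow (le_of_lt hρ) hwre hβ0.le
    _ = r ^ β * (Real.cos θ) ^ β := by
        rw [hwre_eq, Real.mul_rpow hr0.le hcos_pos.le]
    _ ≤ r ^ β * Real.cos (β * θ) := by
        exact mul_le_mul_of_nonneg_left hkey (Real.rpow_nonneg hr0.le β)
end

section
/- Let H be a complex Hilbert space, ν > 0, and let m be the multiplication-by-ξ operator on L²(ℝ,H). Then the spectrum of the bounded operator (im+ν)⁻¹ equals the circle ∂B(r,r) = {z ∈ ℂ : |z − r| = r} with r = 1/(2ν). -/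
open MeasureTheory
open scoped ENNReal

namespace SpecAux

variable {H : Type*} [NormedAddCommGroup H] [InnerProductSpace ℂ H] [CompleteSpace H]

lemma memℒp_mul (φ : ℝ → ℂ) (hφ : Continuous φ) (C : ℝ) (hC : ∀ ξ, ‖φ ξ‖ ≤ C)
    (f : Lp H 2 (volume : Measure ℝ)) :
    MemLp (fun ξ => φ ξ • (f : ℝ → H) ξ) 2 (volume : Measure ℝ) :=
  MemLp.of_le_mul (Lp.memLp f)
    (hφ.aestronglyMeasurable.smul (Lp.aestronglyMeasurable f))
    (Filter.Eventually.of_forall fun ξ => by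
      rw [norm_smul]
      exact mul_le_mul_of_nonneg_right (hC ξ) (norm_nonneg _))

noncomputable def mulOp (φ : ℝ → ℂ) (hφ : Continuous φ) (C : ℝ) (hC : ∀ ξ, ‖φ ξ‖ ≤ C) :
    Lp H 2 (volume : Measure ℝ) →L[ℂ] Lp H 2 (volume : Measure ℝ) :=
  LinearMap.mkContinuous
    { toFun := fun f => (memℒp_mul φ hφ C hC f).toLp _
      map_add' := fun f g => by
        apply Lp.ext
        filter_upwards [MemLp.coeFn_toLp (memℒp_mul φ hφ C hC (f + g)),
          MemLp.coeFn_toLp (memℒp_mul φ hφ C hC f),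
          MemLp.coeFn_toLp (memℒp_mul φ hφ C hC g),
          Lp.coeFn_add f g,
          Lp.coeFn_add ((memℒp_mul φ hφ C hC f).toLp _) ((memℒp_mul φ hφ C hC g).toLp _)]
          with ξ h1 h2 h3 h4 h5
        simp only [h1, h5, Pi.add_apply, h2, h3, h4, smul_add]
      map_smul' := fun c f => by
        apply Lp.ext
        filter_upwards [MemLp.coeFn_toLp (memℒp_mul φ hφ C hC (c • f)),
          MemLp.coeFn_toLp (memℒp_mul φ hφ C hC f),
          Lp.coeFn_smul c f,
          Lp.coeFn_smul c ((memℒp_mul φ hφ C hC f).toLp _)]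
          with ξ h1 h2 h3 h4
        simp only [h1, h4, Pi.smul_apply, h2, h3, RingHom.id_apply, smul_comm c] }
    C
    (fun f => by
      have hC0 : 0 ≤ C := le_trans (norm_nonneg _) (hC 0)
      simp only [LinearMap.coe_mk, AddHom.coe_mk, Lp.norm_toLp]
      have h1 : eLpNorm (fun ξ => φ ξ • (f : ℝ → H) ξ) 2 volume
          ≤ eLpNorm (fun ξ => (C : ℝ) • (f : ℝ → H) ξ) 2 volume := by
        apply eLpNorm_mono
        intro ξ
        rw [norm_smul, norm_smul, Real.norm_of_nonneg hC0]
        exact mul_le_mul_of_nonneg_right (hC ξ) (norm_nonneg _)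
      have h2 : eLpNorm (fun ξ => (C : ℝ) • (f : ℝ → H) ξ) 2 volume
          = (‖C‖₊ : ℝ≥0∞) * eLpNorm (f : ℝ → H) 2 volume := eLpNorm_const_smul C ((f : ℝ → H)) 2 volume
      rw [Lp.norm_def]
      calc (eLpNorm (fun ξ => φ ξ • (f : ℝ → H) ξ) 2 volume).toReal
          ≤ ((‖C‖₊ : ℝ≥0∞) * eLpNorm (f : ℝ → H) 2 volume).toReal := by
            apply ENNReal.toReal_mono
            · exact ENNReal.mul_ne_top ENNReal.coe_ne_top (Lp.eLpNorm_ne_top f)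
            · rw [← h2]; exact h1
        _ = C * (eLpNorm (f : ℝ → H) 2 volume).toReal := by
            rw [ENNReal.toReal_mul, ENNReal.coe_toReal, coe_nnnorm,
              Real.norm_of_nonneg hC0])

lemma mulOp_apply_ae (φ : ℝ → ℂ) (hφ : Continuous φ) (C : ℝ) (hC : ∀ ξ, ‖φ ξ‖ ≤ C)
    (f : Lp H 2 (volume : Measure ℝ)) :
    (mulOp φ hφ C hC f : ℝ → H) =ᵐ[volume] fun ξ => φ ξ • (f : ℝ → H) ξ :=
  MemLp.coeFn_toLp (memℒp_mul φ hφ C hC f)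



variable {H : Type*} [NormedAddCommGroup H] [InnerProductSpace ℂ H] [CompleteSpace H]

lemma hden (ν : ℝ) (hν : 0 < ν) (ξ : ℝ) : Complex.I * (ξ:ℂ) + (ν:ℂ) ≠ 0 := by
  intro h
  have := congrArg Complex.re h
  simp [Complex.add_re, Complex.mul_re] at this
  exact hν.ne' this

lemma hwc (ν : ℝ) (hν : 0 < ν) :
    Continuous fun ξ : ℝ => (Complex.I * (ξ:ℂ) + (ν:ℂ))⁻¹ :=
  ((continuous_const.mul Complex.continuous_ofReal).add continuous_const).inv₀ (hden ν hν)

lemma key_ae (ν : ℝ)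
    (T : Lp H 2 (volume : Measure ℝ) →L[ℂ] Lp H 2 (volume : Measure ℝ))
    (hT : ∀ f : Lp H 2 (volume : Measure ℝ), ∀ᵐ ξ : ℝ ∂volume,
      ((T f : ℝ → H) ξ) = (Complex.I * (ξ : ℂ) + (ν : ℂ))⁻¹ • ((f : ℝ → H) ξ))
    (z : ℂ) (g : Lp H 2 (volume : Measure ℝ)) :
    (((algebraMap ℂ (Lp H 2 (volume : Measure ℝ) →L[ℂ] Lp H 2 (volume : Measure ℝ)) z - T) g : ℝ → H))
      =ᵐ[volume] fun ξ => (z - (Complex.I * (ξ:ℂ) + (ν:ℂ))⁻¹) • ((g : ℝ → H) ξ) := by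
  have heq : (algebraMap ℂ (Lp H 2 (volume : Measure ℝ) →L[ℂ] Lp H 2 (volume : Measure ℝ)) z - T) g
      = z • g - T g := by
    simp [Algebra.algebraMap_eq_smul_one]
  rw [heq]
  filter_upwards [Lp.coeFn_sub (z • g) (T g), Lp.coeFn_smul z g, hT g] with ξ h1 h2 h3
  simp only [h1, Pi.sub_apply, h2, Pi.smul_apply, h3, sub_smul, smul_smul]

theorem notMem_spectrum (ν : ℝ) (hν : 0 < ν)
    (T : Lp H 2 (volume : Measure ℝ) →L[ℂ] Lp H 2 (volume : Measure ℝ))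
    (hT : ∀ f : Lp H 2 (volume : Measure ℝ), ∀ᵐ ξ : ℝ ∂volume,
      ((T f : ℝ → H) ξ) = (Complex.I * (ξ : ℂ) + (ν : ℂ))⁻¹ • ((f : ℝ → H) ξ))
    (z : ℂ) (d : ℝ) (hd : 0 < d)
    (hz : ∀ ξ : ℝ, d ≤ ‖(Complex.I * (ξ:ℂ) + (ν:ℂ))⁻¹ - z‖) :
    z ∉ spectrum ℂ T := by
  have hne : ∀ ξ : ℝ, z - (Complex.I * (ξ:ℂ) + (ν:ℂ))⁻¹ ≠ 0 := by
    intro ξ h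
    have h2 := hz ξ
    rw [← neg_sub, norm_neg] at h2
    rw [h] at h2
    simp at h2
    exact absurd h2 (not_le.mpr hd)
  set φ : ℝ → ℂ := fun ξ => (z - (Complex.I * (ξ:ℂ) + (ν:ℂ))⁻¹)⁻¹ with hφdef
  have hφc : Continuous φ := (continuous_const.sub (hwc ν hν)).inv₀ hne
  have hφb : ∀ ξ, ‖φ ξ‖ ≤ d⁻¹ := by
    intro ξ
    rw [hφdef]
    simp only [norm_inv]
    apply inv_anti₀ hd
    calc d ≤ ‖(Complex.I * (ξ:ℂ) + (ν:ℂ))⁻¹ - z‖ := hz ξ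
      _ = ‖z - (Complex.I * (ξ:ℂ) + (ν:ℂ))⁻¹‖ := norm_sub_rev _ _
  set S := mulOp (H := H) φ hφc d⁻¹ hφb with hS
  set A := algebraMap ℂ (Lp H 2 (volume : Measure ℝ) →L[ℂ] Lp H 2 (volume : Measure ℝ)) z - T with hA
  rw [spectrum.notMem_iff]
  refine ⟨⟨A, S, ?_, ?_⟩, rfl⟩
  · apply ContinuousLinearMap.ext
    intro f
    rw [ContinuousLinearMap.mul_apply, ContinuousLinearMap.one_apply]
    apply Lp.ext
    filter_upwards [key_ae ν T hT z (S f), mulOp_apply_ae φ hφc d⁻¹ hφb f] with ξ h1 h2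
    rw [h1, h2, smul_smul, mul_inv_cancel₀ (hne ξ), one_smul]
  · apply ContinuousLinearMap.ext
    intro f
    rw [ContinuousLinearMap.mul_apply, ContinuousLinearMap.one_apply]
    apply Lp.ext
    filter_upwards [mulOp_apply_ae φ hφc d⁻¹ hφb (A f), key_ae ν T hT z f] with ξ h1 h2
    rw [h1, h2, smul_smul, inv_mul_cancel₀ (hne ξ), one_smul]

theorem mem_spectrum (ν : ℝ) (hν : 0 < ν) [Nontrivial H]
    (T : Lp H 2 (volume : Measure ℝ) →L[ℂ] Lp H 2 (volume : Measure ℝ))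
    (hT : ∀ f : Lp H 2 (volume : Measure ℝ), ∀ᵐ ξ : ℝ ∂volume,
      ((T f : ℝ → H) ξ) = (Complex.I * (ξ : ℂ) + (ν : ℂ))⁻¹ • ((f : ℝ → H) ξ))
    (z : ℂ)
    (hz : ∀ ε : ℝ, 0 < ε → ∃ a b : ℝ, a < b ∧
      ∀ ξ ∈ Set.Ioc a b, ‖(Complex.I * (ξ:ℂ) + (ν:ℂ))⁻¹ - z‖ ≤ ε) :
    z ∈ spectrum ℂ T := by
  by_contra hns
  rw [spectrum.notMem_iff] at hns
  obtain ⟨u, hu⟩ := hns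
  set R : Lp H 2 (volume : Measure ℝ) →L[ℂ] Lp H 2 (volume : Measure ℝ) := ↑u⁻¹ with hR
  set A : Lp H 2 (volume : Measure ℝ) →L[ℂ] Lp H 2 (volume : Measure ℝ) :=
    algebraMap ℂ _ z - T with hA
  have hRA : ∀ f, R (A f) = f := by
    intro f
    have : R * A = 1 := by rw [← hu]; exact u.inv_mul
    calc R (A f) = (R * A) f := rfl
      _ = f := by rw [this]; rfl
  have hε : (0:ℝ) < (2 * (‖R‖ + 1))⁻¹ := by positivity
  obtain ⟨a, b, hab, hball⟩ := hz _ hε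
  obtain ⟨v, hv⟩ := exists_ne (0 : H)
  have ms : MeasurableSet (Set.Ioc a b) := measurableSet_Ioc
  have hμs : volume (Set.Ioc a b) ≠ ∞ := by
    rw [Real.volume_Ioc]; exact ENNReal.ofReal_ne_top
  set f : Lp H 2 (volume : Measure ℝ) := indicatorConstLp 2 ms hμs v with hfdef
  have hfpos : 0 < ‖f‖ := by
    rw [hfdef, norm_indicatorConstLp (by norm_num) (by norm_num)]
    have h1 : (0:ℝ) < (volume (Set.Ioc a b)).toReal := by
      rw [Real.volume_Ioc, ENNReal.toReal_ofReal (by linarith)]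
      linarith
    have hvn : (0:ℝ) < ‖v‖ := norm_pos_iff.mpr hv
    exact mul_pos hvn (Real.rpow_pos_of_pos h1 _)
  have hAf : ‖A f‖ ≤ (2 * (‖R‖ + 1))⁻¹ * ‖f‖ := by
    have hptwise : ∀ᵐ ξ : ℝ ∂volume,
        ‖((A f : ℝ → H)) ξ‖ ≤ ‖((2 * (‖R‖ + 1))⁻¹ : ℝ) • ((f : ℝ → H) ξ)‖ := by
      filter_upwards [key_ae ν T hT z f, indicatorConstLp_coeFn (p := 2) (μ := (volume : Measure ℝ)) (hs := ms) (hμs := hμs) (c := v)] with ξ h1 h2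
      rw [h1, h2, norm_smul, norm_smul, Real.norm_of_nonneg (le_of_lt hε)]
      by_cases hmem : ξ ∈ Set.Ioc a b
      · apply mul_le_mul_of_nonneg_right _ (norm_nonneg _)
        rw [← norm_neg, neg_sub]
        exact hball ξ hmem
      · rw [Set.indicator_of_notMem hmem, norm_zero, mul_zero, mul_zero]
    calc ‖A f‖ = (eLpNorm ((A f : ℝ → H)) 2 volume).toReal := Lp.norm_def _
      _ ≤ (eLpNorm (fun ξ => ((2 * (‖R‖ + 1))⁻¹ : ℝ) • ((f : ℝ → H) ξ)) 2 volume).toReal := by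
          apply ENNReal.toReal_mono
          · rw [show (fun ξ => ((2 * (‖R‖ + 1))⁻¹ : ℝ) • ((f : ℝ → H) ξ))
              = ((2 * (‖R‖ + 1))⁻¹ : ℝ) • ((f : ℝ → H)) from rfl, eLpNorm_const_smul]
            exact ENNReal.mul_ne_top ENNReal.coe_ne_top (Lp.eLpNorm_ne_top f)
          · exact eLpNorm_mono_ae hptwise
      _ = (2 * (‖R‖ + 1))⁻¹ * ‖f‖ := by
          rw [show (fun ξ => ((2 * (‖R‖ + 1))⁻¹ : ℝ) • ((f : ℝ → H) ξ))
            = ((2 * (‖R‖ + 1))⁻¹ : ℝ) • ((f : ℝ → H)) from rfl, eLpNorm_const_smul,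
            ENNReal.toReal_mul, toReal_enorm,
            Real.norm_of_nonneg (le_of_lt hε), Lp.norm_def]
  have h1 : ‖f‖ ≤ ‖R‖ * ‖A f‖ := by
    calc ‖f‖ = ‖R (A f)‖ := by rw [hRA f]
      _ ≤ ‖R‖ * ‖A f‖ := R.le_opNorm _
  have h2 : ‖R‖ * ((2 * (‖R‖ + 1))⁻¹ * ‖f‖) ≤ (1/2) * ‖f‖ := by
    have hRn : (0:ℝ) ≤ ‖R‖ := norm_nonneg _
    rw [← mul_assoc]
    apply mul_le_mul_of_nonneg_right _ (le_of_lt hfpos)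
    rw [mul_inv_le_iff₀ (by positivity)]
    nlinarith
  have h3 : ‖f‖ ≤ (1/2) * ‖f‖ :=
    le_trans h1 (le_trans (mul_le_mul_of_nonneg_left hAf (norm_nonneg R)) h2)
  linarith


lemma on_circle (ν : ℝ) (hν : 0 < ν) (ξ : ℝ) :
    ‖(Complex.I * (ξ:ℂ) + (ν:ℂ))⁻¹ - ((1/(2*ν) : ℝ) : ℂ)‖ = 1/(2*ν) := by
  have hd := hden ν hν ξ
  have hν' : (ν:ℂ) ≠ 0 := by
    simpa using (Complex.ofReal_ne_zero).mpr hν.ne'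
  have hmul : ((Complex.I * (ξ:ℂ) + (ν:ℂ))⁻¹ - ((1/(2*ν):ℝ):ℂ)) * (Complex.I * (ξ:ℂ) + (ν:ℂ))
      = ((1/(2*ν):ℝ):ℂ) * ((ν:ℂ) - Complex.I * (ξ:ℂ)) := by
    push_cast
    field_simp
    ring
  have hnorm2 : ‖(ν:ℂ) - Complex.I * (ξ:ℂ)‖ = ‖Complex.I * (ξ:ℂ) + (ν:ℂ)‖ := by
    rw [show (ν:ℂ) - Complex.I*(ξ:ℂ) = (starRingEnd ℂ) (Complex.I * (ξ:ℂ) + (ν:ℂ)) by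
      simp [map_add, map_mul, Complex.conj_I, Complex.conj_ofReal]; ring]
    exact RCLike.norm_conj _
  have hcong := congrArg norm hmul
  rw [norm_mul, norm_mul, hnorm2] at hcong
  have hpos : ‖Complex.I * (ξ:ℂ) + (ν:ℂ)‖ ≠ 0 := norm_ne_zero_iff.mpr hd
  have hfin := mul_right_cancel₀ hpos hcong
  rw [hfin, Complex.norm_real]
  exact Real.norm_of_nonneg (by positivity)

end SpecAux

open SpecAux in
/-- The spectrum of the bounded multiplication operator `(im + ν)⁻¹` on `L²(ℝ,H)`
(multiplication by `ξ ↦ (iξ + ν)⁻¹`) equals the circle `∂B(r,r)` with `r = 1/(2ν)`. -/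
theorem spectrum_inv_im_add_nu
    {H : Type*} [NormedAddCommGroup H] [InnerProductSpace ℂ H] [CompleteSpace H]
    [Nontrivial H] (ν : ℝ) (hν : 0 < ν)
    (T : Lp H 2 (volume : Measure ℝ) →L[ℂ] Lp H 2 (volume : Measure ℝ))
    (hT : ∀ f : Lp H 2 (volume : Measure ℝ), ∀ᵐ ξ : ℝ ∂volume,
      ((T f : ℝ → H) ξ) = (Complex.I * (ξ : ℂ) + (ν : ℂ))⁻¹ • ((f : ℝ → H) ξ)) :
    spectrum ℂ T = Metric.sphere ((1 / (2 * ν) : ℝ) : ℂ) (1 / (2 * ν)) := by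
  ext z
  rw [mem_sphere_iff_norm]
  constructor
  · intro hzspec
    by_contra hnd
    have hd : 0 < |‖z - ((1/(2*ν):ℝ):ℂ)‖ - 1/(2*ν)| := abs_pos.mpr (sub_ne_zero.mpr hnd)
    refine SpecAux.notMem_spectrum ν hν T hT z _ hd ?_ hzspec
    intro ξ
    calc |‖z - ((1/(2*ν):ℝ):ℂ)‖ - 1/(2*ν)|
        = |‖z - ((1/(2*ν):ℝ):ℂ)‖ - ‖(Complex.I * (ξ:ℂ) + (ν:ℂ))⁻¹ - ((1/(2*ν):ℝ):ℂ)‖| := by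
          rw [SpecAux.on_circle ν hν ξ]
      _ ≤ ‖(z - ((1/(2*ν):ℝ):ℂ)) - ((Complex.I * (ξ:ℂ) + (ν:ℂ))⁻¹ - ((1/(2*ν):ℝ):ℂ))‖ :=
          abs_norm_sub_norm_le _ _
      _ = ‖z - (Complex.I * (ξ:ℂ) + (ν:ℂ))⁻¹‖ := by congr 1; ring
      _ = ‖(Complex.I * (ξ:ℂ) + (ν:ℂ))⁻¹ - z‖ := norm_sub_rev _ _
  · intro hz
    apply SpecAux.mem_spectrum ν hν T hT z
    intro ε hε
    by_cases h0 : z = 0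
    · subst h0
      refine ⟨max ε⁻¹ 1, max ε⁻¹ 1 + 1, lt_add_one _, ?_⟩
      intro ξ hξ
      have hξ1 : ε⁻¹ < ξ := lt_of_le_of_lt (le_max_left _ _) hξ.1
      have hξpos : (0:ℝ) < ξ := lt_of_lt_of_le one_pos (le_of_lt (lt_of_le_of_lt (le_max_right _ _) hξ.1))
      rw [sub_zero, norm_inv]
      have him : (Complex.I * (ξ:ℂ) + (ν:ℂ)).im = ξ := by simp
      have hb : ξ ≤ ‖Complex.I * (ξ:ℂ) + (ν:ℂ)‖ := by
        calc ξ ≤ |(Complex.I * (ξ:ℂ) + (ν:ℂ)).im| := by rw [him]; exact le_abs_self ξ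
          _ ≤ ‖Complex.I * (ξ:ℂ) + (ν:ℂ)‖ := Complex.abs_im_le_norm _
      calc ‖Complex.I * (ξ:ℂ) + (ν:ℂ)‖⁻¹ ≤ ξ⁻¹ := by
            apply inv_anti₀ hξpos hb
        _ ≤ ε := by
            rw [inv_le_comm₀ hξpos hε]
            exact le_of_lt hξ1
    · -- z ≠ 0, on the circle
      have hns : z.re^2 + z.im^2 = (1/ν) * z.re := by
        have h1 : ‖z - ((1/(2*ν):ℝ):ℂ)‖^2 = (1/(2*ν))^2 := by rw [hz]
        rw [Complex.sq_norm, Complex.normSq_apply] at h1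
        simp only [Complex.sub_re, Complex.sub_im, Complex.ofReal_re, Complex.ofReal_im,
          sub_zero] at h1
        linear_combination h1
      have hre : z.re ≠ 0 := by
        intro h
        apply h0
        have h2 : z.im^2 = 0 := by rw [h] at hns; simpa using hns
        have him : z.im = 0 := pow_eq_zero_iff (n := 2) (by norm_num) |>.mp h2
        exact Complex.ext h him
      have hnspos : 0 < z.re^2 + z.im^2 := by
        rcases lt_or_gt_of_ne hre with h | h <;> nlinarith [sq_nonneg z.im]
      have hns2 : ν * (z.re^2 + z.im^2) = z.re := by
        rw [hns]; field_simp
      set ξ₀ : ℝ := -z.im / (z.re^2 + z.im^2) with hξ₀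
      have hmul1 : (Complex.I * (ξ₀:ℂ) + (ν:ℂ)) * z = 1 := by
        apply Complex.ext
        · simp only [Complex.mul_re, Complex.add_re, Complex.add_im, Complex.mul_im,
            Complex.I_re, Complex.I_im, Complex.ofReal_re, Complex.ofReal_im, Complex.one_re]
          rw [hξ₀]
          field_simp
          linear_combination z.re * hns2
        · simp only [Complex.mul_re, Complex.add_re, Complex.add_im, Complex.mul_im,
            Complex.I_re, Complex.I_im, Complex.ofReal_re, Complex.ofReal_im, Complex.one_im]
          rw [hξ₀]
          field_simp
          linear_combination z.im * hns2
      have hw0 : (Complex.I * (ξ₀:ℂ) + (ν:ℂ))⁻¹ = z := inv_eq_of_mul_eq_one_right hmul1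
      have hc := (SpecAux.hwc ν hν).continuousAt (x := ξ₀)
      rw [Metric.continuousAt_iff] at hc
      obtain ⟨δ, hδ, hδ'⟩ := hc ε hε
      refine ⟨ξ₀, ξ₀ + δ/2, by linarith, ?_⟩
      intro ξ hξ
      have hdist : dist ξ ξ₀ < δ := by
        rw [Real.dist_eq, abs_of_pos (by linarith [hξ.1])]
        have := hξ.2
        simp only [Set.mem_Ioc] at hξ
        linarith [hξ.1, hξ.2]
      have := hδ' hdist
      simp only [dist_eq_norm] at this
      rw [hw0] at this
      exact le_of_lt this
end
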